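/- There is a constant C > 0 with the following property: if a locally integrable function f on the open unit disc satisfies the BWMO condition, then for every z ∈ 𝔻 and all points z̃, ζ ∈ B(z) with z̃ ≾ ζ (so that B(z̃,ζ) ⊆ B(z)), one has (1/|B(z)|)·|∫_{B(z̃,ζ)} (f(ξ) − f̂(z)) dA(ξ)| ≤ C·‖f‖_BWMO. -/

import Mathlib

open MeasureTheory Set

noncomputable section

/-- The normalized area measure on the plane: planar Lebesgue measure divided by `π`. -/
def dA : Measure ℂ := (ENNReal.ofReal Real.pi)⁻¹ • volume

/-- The open unit disc `𝔻`. -/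
def unitDisc : Set ℂ := {z : ℂ | ‖z‖ < 1}

/-- The argument `θ` of `z`, normalized to lie in `[0, 2π)`. -/
def theta (z : ℂ) : ℝ := toIcoMod Real.two_pi_pos 0 (Complex.arg z)

/-- The angle of `ζ`, normalized to lie in `[theta z, theta z + 2π)`;
for `ζ ∈ B(z)` this is the angle `θ̃ ∈ [θ, θ + π(1-r)]` of the paper's convention. -/
def angFrom (z ζ : ℂ) : ℝ := toIcoMod Real.two_pi_pos (theta z) (Complex.arg ζ)

/-- The polar rectangle `{ρ e^{iφ} : r₁ ≤ ρ ≤ r₂, φ₁ ≤ φ ≤ φ₂}`. -/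
def polarRect (r₁ r₂ φ₁ φ₂ : ℝ) : Set ℂ :=
  {w : ℂ | ∃ ρ φ : ℝ, r₁ ≤ ρ ∧ ρ ≤ r₂ ∧ φ₁ ≤ φ ∧ φ ≤ φ₂ ∧
    w = (ρ : ℂ) * Complex.exp ((φ : ℂ) * Complex.I)}

/-- The set `B(z)` for `z = r e^{iθ} ∈ 𝔻`. -/
def Bz (z : ℂ) : Set ℂ :=
  polarRect ‖z‖ (1 - (1 - ‖z‖) / 2) (theta z) (theta z + Real.pi * (1 - ‖z‖))

/-- The set `B(z, ζ)` for `ζ ∈ B(z)`. -/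
def Bzz (z ζ : ℂ) : Set ℂ := polarRect ‖z‖ ‖ζ‖ (theta z) (angFrom z ζ)

/-- The set `B(ζ₁, ζ₂)` for points `ζ₁ ≾ ζ₂` of `B(z)`. -/
def Bsub (z ζ₁ ζ₂ : ℂ) : Set ℂ := polarRect ‖ζ₁‖ ‖ζ₂‖ (angFrom z ζ₁) (angFrom z ζ₂)

/-- The relation `ζ₁ ≾ ζ₂` for points of `B(z)`: `ρ₁ ≤ ρ₂` and `φ₁ ≤ φ₂`. -/
def precSim (z ζ₁ ζ₂ : ℂ) : Prop := ‖ζ₁‖ ≤ ‖ζ₂‖ ∧ angFrom z ζ₁ ≤ angFrom z ζ₂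

/-- The average `f̂_K = (1/|K|) ∫_K f dA` of `f` over a set `K`. -/
def avgOn (f : ℂ → ℂ) (K : Set ℂ) : ℂ := ((dA K).toReal)⁻¹ • ∫ w in K, f w ∂dA

/-- The average function `f̂(z) = f̂_{B(z)}`. -/
def avg (f : ℂ → ℂ) (z : ℂ) : ℂ := avgOn f (Bz z)

/-- The quantity `(1/|B(z)|) |∫_{B(z,ζ)} (f(ξ) - f̂(z)) dA(ξ)|`. -/
def wQuot (f : ℂ → ℂ) (z ζ : ℂ) : ℝ :=
  ((dA (Bz z)).toReal)⁻¹ * ‖∫ ξ in Bzz z ζ, (f ξ - avg f z) ∂dA‖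

/-- The BWMO condition: `‖f‖_BWMO < ∞`. -/
def IsBWMO (f : ℂ → ℂ) : Prop := ∃ C : ℝ, ∀ z ∈ unitDisc, ∀ ζ ∈ Bz z, wQuot f z ζ ≤ C

/-- The BWMO seminorm `‖f‖_BWMO`. -/
def bwmoNorm (f : ℂ → ℂ) : ℝ :=
  sSup {c : ℝ | ∃ z ∈ unitDisc, ∃ ζ ∈ Bz z, c = wQuot f z ζ}

/-- The VWMO condition:
`(1/|B(z)|) sup_{ζ ∈ B(z)} |∫_{B(z,ζ)} (f - f̂(z)) dA| → 0` as `|z| → 1`. -/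
def IsVWMO (f : ℂ → ℂ) : Prop :=
  ∀ ε > (0:ℝ), ∃ r₀ < (1:ℝ), ∀ z ∈ unitDisc, r₀ ≤ ‖z‖ → ∀ ζ ∈ Bz z, wQuot f z ζ ≤ ε

/-- The Bergman-metric disc `D(z,1)` of radius `1` centered at `z`. -/
def Dball (z : ℂ) : Set ℂ :=
  {w : ℂ | ‖w‖ < 1 ∧ ‖(z - w) / (1 - (starRingEnd ℂ) w * z)‖ < Real.tanh 1}

/-- The hyperbolic average `f̂₁(z) = (1/|D(z,1)|) ∫_{D(z,1)} f dA` of a real-valued `f`. -/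
def avg1 (f : ℂ → ℝ) (z : ℂ) : ℝ := ((dA (Dball z)).toReal)⁻¹ * ∫ w in Dball z, f w ∂dA

/-- The mean oscillation `(1/|D(z,1)|) ∫_{D(z,1)} |f - f̂₁(z)| dA` of a real-valued `f`. -/
def meanOsc1 (f : ℂ → ℝ) (z : ℂ) : ℝ :=
  ((dA (Dball z)).toReal)⁻¹ * ∫ ξ in Dball z, |f ξ - avg1 f z| ∂dA

/-- The Berezin transform `f̃(z) = ∫_𝔻 f(w) |k_z(w)|² dA(w)`,
where `k_z(w) = (1-|z|²)/(1-w z̄)²`. -/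
def berezin (f : ℂ → ℂ) (z : ℂ) : ℂ :=
  ∫ w in unitDisc, f w * ((((1 - ‖z‖ ^ 2) ^ 2 / ‖1 - w * (starRingEnd ℂ) z‖ ^ 4 : ℝ)) : ℂ) ∂dA

/-- The example symbol of Section 4:
`f(r e^{iθ}) = (1/(r (1-r)^{b-β})) sin(1/(1-r)^b)` for `r ≥ 1/2`, and `1` for `r < 1/2`. -/
def fEx (b β : ℝ) (z : ℂ) : ℝ :=
  if ‖z‖ < 1 / 2 then 1
  else (1 / (‖z‖ * (1 - ‖z‖) ^ (b - β))) * Real.sin (1 / (1 - ‖z‖) ^ b)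

end

section AuxProofs
open Complex

lemma norm_polar (ρ φ : ℝ) : ‖(ρ:ℂ) * Complex.exp ((φ:ℂ) * Complex.I)‖ = |ρ| := by
  rw [norm_mul, Complex.norm_exp_ofReal_mul_I]
  simp [Real.norm_eq_abs]

lemma exp_add_int (φ : ℝ) (k : ℤ) :
    Complex.exp ((↑(φ + k*(2*Real.pi)) : ℂ) * Complex.I) = Complex.exp ((φ:ℂ) * Complex.I) := by
  push_cast
  rw [add_mul, Complex.exp_add,
    show ((k:ℂ)*(2*(Real.pi:ℂ)))*Complex.I = (k:ℂ)*(2*(Real.pi:ℂ)*Complex.I) by ring,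
    Complex.exp_int_mul_two_pi_mul_I, mul_one]

lemma arg_polar {ρ : ℝ} (hρ : 0 < ρ) (φ : ℝ) :
    ∃ k : ℤ, Complex.arg ((ρ:ℂ) * Complex.exp ((φ:ℂ)*Complex.I)) = φ + k * (2*Real.pi) := by
  have hw : Complex.arg ((ρ:ℂ) * Complex.exp ((φ:ℂ)*Complex.I))
      = Complex.arg (Complex.exp ((φ:ℂ)*Complex.I)) := Complex.arg_real_mul _ hρ
  have habs : ‖Complex.exp ((φ:ℂ)*Complex.I)‖ = 1 := Complex.norm_exp_ofReal_mul_I φ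
  have hmain : Complex.exp ((Complex.arg (Complex.exp ((φ:ℂ)*Complex.I)) : ℂ) * Complex.I)
      = Complex.exp ((φ:ℂ)*Complex.I) := by
    conv_rhs => rw [← Complex.norm_mul_exp_arg_mul_I (Complex.exp ((φ:ℂ)*Complex.I))]
    rw [habs]; simp
  obtain ⟨n, hn⟩ := Complex.exp_eq_exp_iff_exists_int.mp hmain
  refine ⟨n, ?_⟩
  rw [hw]
  have h2 : ((Complex.arg (Complex.exp ((φ:ℂ)*Complex.I)) : ℂ))
      = ((φ + n*(2*Real.pi) : ℝ) : ℂ) := by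
    apply mul_right_cancel₀ Complex.I_ne_zero
    push_cast
    linear_combination hn
  exact_mod_cast h2

lemma mem_polarRect_iff {a b c d θ : ℝ} (ha : 0 ≤ a) (hθc : θ ≤ c) (hd : d < θ + 2*Real.pi)
    {w : ℂ} (hw : w ≠ 0) :
    w ∈ polarRect a b c d ↔
      a ≤ ‖w‖ ∧ ‖w‖ ≤ b ∧ c ≤ toIcoMod Real.two_pi_pos θ (Complex.arg w) ∧
        toIcoMod Real.two_pi_pos θ (Complex.arg w) ≤ d := by
  constructor
  · rintro ⟨ρ, φ, h1, h2, h3, h4, rfl⟩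
    have hρ0 : 0 ≤ ρ := le_trans ha h1
    have hρpos : 0 < ρ := by
      rcases hρ0.lt_or_eq with h | h
      · exact h
      · exfalso; apply hw; rw [← h]; simp
    have hnorm : ‖(ρ:ℂ) * Complex.exp ((φ:ℂ) * Complex.I)‖ = ρ := by
      rw [norm_polar]; exact abs_of_nonneg hρ0
    obtain ⟨k, hk⟩ := arg_polar hρpos φ
    have ht : toIcoMod Real.two_pi_pos θ (Complex.arg ((ρ:ℂ) * Complex.exp ((φ:ℂ)*Complex.I))) = φ := by
      rw [toIcoMod_eq_iff]
      refine ⟨⟨le_trans hθc h3, lt_of_le_of_lt h4 hd⟩, ⟨k, ?_⟩⟩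
      rw [hk]; push_cast [zsmul_eq_mul]; ring
    rw [hnorm, ht]
    exact ⟨h1, h2, h3, h4⟩
  · rintro ⟨h1, h2, h3, h4⟩
    set t := toIcoMod Real.two_pi_pos θ (Complex.arg w) with htdef
    refine ⟨‖w‖, t, h1, h2, h3, h4, ?_⟩
    obtain ⟨k, hk⟩ : ∃ k : ℤ, Complex.arg w = t + k • (2*Real.pi) :=
      ((toIcoMod_eq_iff Real.two_pi_pos).mp rfl).2
    conv_lhs => rw [← Complex.norm_mul_exp_arg_mul_I w]
    congr 1
    rw [hk, show t + k • (2*Real.pi) = t + (k:ℝ)*(2*Real.pi) by simp [zsmul_eq_mul]]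
    exact exp_add_int t k

lemma polarRect_subset {a b c d a' b' c' d' : ℝ} (ha : a ≤ a') (hb : b' ≤ b)
    (hc : c ≤ c') (hd : d' ≤ d) : polarRect a' b' c' d' ⊆ polarRect a b c d := by
  rintro w ⟨ρ, φ, h1, h2, h3, h4, rfl⟩
  exact ⟨ρ, φ, le_trans ha h1, le_trans h2 hb, le_trans hc h3, le_trans h4 hd, rfl⟩

lemma polarRect_eq_image (a b c d : ℝ) :
    polarRect a b c d =
      (fun p : ℝ × ℝ => (p.1:ℂ) * Complex.exp ((p.2:ℂ)*Complex.I)) '' (Icc a b ×ˢ Icc c d) := by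
  ext w
  constructor
  · rintro ⟨ρ, φ, h1, h2, h3, h4, rfl⟩
    exact ⟨(ρ, φ), ⟨⟨h1, h2⟩, ⟨h3, h4⟩⟩, rfl⟩
  · rintro ⟨⟨ρ, φ⟩, ⟨⟨h1, h2⟩, ⟨h3, h4⟩⟩, rfl⟩
    exact ⟨ρ, φ, h1, h2, h3, h4, rfl⟩

lemma isCompact_polarRect (a b c d : ℝ) : IsCompact (polarRect a b c d) := by
  rw [polarRect_eq_image]
  exact (isCompact_Icc.prod isCompact_Icc).image (by fun_prop)

lemma measurableSet_polarRect (a b c d : ℝ) : MeasurableSet (polarRect a b c d) :=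
  (isCompact_polarRect a b c d).measurableSet

lemma dA_null {s : Set ℂ} (h : volume s = 0) : dA s = 0 := by
  simp [dA, Measure.smul_apply, h]

lemma dA_sphere (ρ : ℝ) : dA {w : ℂ | ‖w‖ = ρ} = 0 := by
  apply dA_null
  have : {w : ℂ | ‖w‖ = ρ} = Metric.sphere (0:ℂ) ρ := by
    ext w; simp [Metric.mem_sphere, dist_eq_norm]
  rw [this]; exact Measure.addHaar_sphere volume 0 ρ

lemma dA_ray (θ φ : ℝ) : dA {w : ℂ | toIcoMod Real.two_pi_pos θ (Complex.arg w) = φ} = 0 := by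
  apply dA_null
  have hsub : {w : ℂ | toIcoMod Real.two_pi_pos θ (Complex.arg w) = φ} ⊆
      (Submodule.span ℝ {Complex.exp ((φ:ℂ)*Complex.I)} : Submodule ℝ ℂ) := by
    intro w hw
    obtain ⟨k, hk⟩ : ∃ k : ℤ, Complex.arg w = φ + k • (2*Real.pi) :=
      ((toIcoMod_eq_iff Real.two_pi_pos).mp hw).2
    have hw2 : w = (‖w‖ : ℂ) * Complex.exp ((φ:ℂ)*Complex.I) := by
      conv_lhs => rw [← Complex.norm_mul_exp_arg_mul_I w]
      congr 1
      rw [hk, show φ + k • (2*Real.pi) = φ + (k:ℝ)*(2*Real.pi) by simp [zsmul_eq_mul]]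
      exact exp_add_int φ k
    rw [SetLike.mem_coe, Submodule.mem_span_singleton]
    exact ⟨‖w‖, by rw [Complex.real_smul]; exact hw2.symm⟩
  refine measure_mono_null hsub (Measure.addHaar_submodule volume _ ?_)
  intro htop
  have hmem : Complex.I * Complex.exp ((φ:ℂ)*Complex.I) ∈
      (Submodule.span ℝ {Complex.exp ((φ:ℂ)*Complex.I)} : Submodule ℝ ℂ) := by
    rw [htop]; trivial
  obtain ⟨c, hc⟩ := Submodule.mem_span_singleton.mp hmem
  rw [Complex.real_smul] at hc
  have : (c:ℂ) = Complex.I := mul_right_cancel₀ (Complex.exp_ne_zero _) hc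
  simpa using congrArg Complex.im this

lemma dA_zero_singleton : dA ({0} : Set ℂ) = 0 := dA_null (measure_singleton 0)

lemma integral_polarRect_decomp {r θ ρ₁ ρ₂ φ₁ φ₂ : ℝ} (hr : 0 ≤ r)
    (h1 : r ≤ ρ₁) (h12 : ρ₁ ≤ ρ₂) (hθ1 : θ ≤ φ₁) (hφ12 : φ₁ ≤ φ₂) (hφ2 : φ₂ < θ + 2*Real.pi)
    {g : ℂ → ℂ} (hg : IntegrableOn g (polarRect r ρ₂ θ φ₂) dA) :
    ∫ w in polarRect ρ₁ ρ₂ φ₁ φ₂, g w ∂dA =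
      (∫ w in polarRect r ρ₂ θ φ₂, g w ∂dA) + (∫ w in polarRect r ρ₁ θ φ₁, g w ∂dA)
      - (∫ w in polarRect r ρ₁ θ φ₂, g w ∂dA) - (∫ w in polarRect r ρ₂ θ φ₁, g w ∂dA) := by
  have hρ₁0 : 0 ≤ ρ₁ := le_trans hr h1
  have hφ1lt : φ₁ < θ + 2*Real.pi := lt_of_le_of_lt hφ12 hφ2
  -- subsets of the big rectangle
  have hsubB : polarRect ρ₁ ρ₂ φ₁ φ₂ ⊆ polarRect r ρ₂ θ φ₂ :=
    polarRect_subset h1 le_rfl hθ1 le_rfl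
  have hsub11 : polarRect r ρ₁ θ φ₁ ⊆ polarRect r ρ₂ θ φ₂ :=
    polarRect_subset le_rfl h12 le_rfl hφ12
  have hsub12 : polarRect r ρ₁ θ φ₂ ⊆ polarRect r ρ₂ θ φ₂ :=
    polarRect_subset le_rfl h12 le_rfl le_rfl
  have hsub21 : polarRect r ρ₂ θ φ₁ ⊆ polarRect r ρ₂ θ φ₂ :=
    polarRect_subset le_rfl le_rfl le_rfl hφ12
  have hgB := hg.mono_set hsubB
  have hg11 := hg.mono_set hsub11
  have hg12 := hg.mono_set hsub12
  have hg21 := hg.mono_set hsub21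
  have i22 := hg.integrable_indicator (measurableSet_polarRect r ρ₂ θ φ₂)
  have i11 := hg11.integrable_indicator (measurableSet_polarRect r ρ₁ θ φ₁)
  have i12 := hg12.integrable_indicator (measurableSet_polarRect r ρ₁ θ φ₂)
  have i21 := hg21.integrable_indicator (measurableSet_polarRect r ρ₂ θ φ₁)
  have j1 : Integrable (fun w => (polarRect r ρ₂ θ φ₂).indicator g w
      + (polarRect r ρ₁ θ φ₁).indicator g w) dA := i22.add i11
  have j2 : Integrable (fun w => (polarRect r ρ₂ θ φ₂).indicator g w
      + (polarRect r ρ₁ θ φ₁).indicator g w - (polarRect r ρ₁ θ φ₂).indicator g w) dA :=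
    j1.sub i12
  rw [← integral_indicator (measurableSet_polarRect ρ₁ ρ₂ φ₁ φ₂)]
  have key : ∫ w, (polarRect ρ₁ ρ₂ φ₁ φ₂).indicator g w ∂dA
      = ∫ w, ((polarRect r ρ₂ θ φ₂).indicator g w + (polarRect r ρ₁ θ φ₁).indicator g w
        - (polarRect r ρ₁ θ φ₂).indicator g w - (polarRect r ρ₂ θ φ₁).indicator g w) ∂dA := by
    apply integral_congr_ae
    have hnull : dA ({(0:ℂ)} ∪ {w : ℂ | ‖w‖ = ρ₁} ∪
        {w : ℂ | toIcoMod Real.two_pi_pos θ (Complex.arg w) = φ₁}) = 0 :=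
      measure_union_null (measure_union_null dA_zero_singleton (dA_sphere ρ₁)) (dA_ray θ φ₁)
    filter_upwards [measure_eq_zero_iff_ae_notMem.mp hnull] with w hw
    simp only [mem_union, mem_singleton_iff, mem_setOf_eq, not_or] at hw
    obtain ⟨⟨hw0, hwρ⟩, hwφ⟩ := hw
    have hθt : θ ≤ toIcoMod Real.two_pi_pos θ (Complex.arg w) := left_le_toIcoMod Real.two_pi_pos θ (Complex.arg w)
    have hBiff := mem_polarRect_iff (a := ρ₁) (b := ρ₂) hρ₁0 hθ1 hφ2 hw0
    have h22iff := mem_polarRect_iff (a := r) (b := ρ₂) (c := θ) hr le_rfl hφ2 hw0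
    have h11iff := mem_polarRect_iff (a := r) (b := ρ₁) (c := θ) hr le_rfl hφ1lt hw0
    have h12iff := mem_polarRect_iff (a := r) (b := ρ₁) (c := θ) hr le_rfl hφ2 hw0
    have h21iff := mem_polarRect_iff (a := r) (b := ρ₂) (c := θ) hr le_rfl hφ1lt hw0
    classical
    rw [Set.indicator_apply, Set.indicator_apply, Set.indicator_apply, Set.indicator_apply,
      Set.indicator_apply]
    simp only [hBiff, h22iff, h11iff, h12iff, h21iff]
    rcases (Ne.lt_or_gt hwρ) with hn | hn <;> rcases (Ne.lt_or_gt (hwφ : toIcoMod Real.two_pi_pos θ (Complex.arg w) ≠ φ₁)) with ht | ht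
    · have k1 : ¬(ρ₁ ≤ ‖w‖) := not_le.mpr hn
      have k3 : ‖w‖ ≤ ρ₂ := hn.le.trans h12
      have k5 : toIcoMod Real.two_pi_pos θ (Complex.arg w) ≤ φ₂ := ht.le.trans hφ12
      by_cases hrn : r ≤ ‖w‖ <;>
        simp [k1, hn.le, k3, ht.le, k5, hθt, hrn] <;> try ring
    · have k1 : ¬(ρ₁ ≤ ‖w‖) := not_le.mpr hn
      have k3 : ‖w‖ ≤ ρ₂ := hn.le.trans h12
      have k4 : ¬(toIcoMod Real.two_pi_pos θ (Complex.arg w) ≤ φ₁) := not_le.mpr ht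
      by_cases hrn : r ≤ ‖w‖ <;> by_cases ht2 : toIcoMod Real.two_pi_pos θ (Complex.arg w) ≤ φ₂ <;>
        simp [k1, hn.le, k3, k4, hθt, hrn, ht2] <;> try ring
    · have k1 : ¬(‖w‖ ≤ ρ₁) := not_le.mpr hn
      have k5 : toIcoMod Real.two_pi_pos θ (Complex.arg w) ≤ φ₂ := ht.le.trans hφ12
      have k6 : ¬(φ₁ ≤ toIcoMod Real.two_pi_pos θ (Complex.arg w)) := not_le.mpr ht
      by_cases hrn : r ≤ ‖w‖ <;> by_cases hn2 : ‖w‖ ≤ ρ₂ <;>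
        simp [k1, hn.le, k5, k6, ht.le, hθt, hrn, hn2] <;> try ring
    · have k1 : ¬(‖w‖ ≤ ρ₁) := not_le.mpr hn
      have k4 : ¬(toIcoMod Real.two_pi_pos θ (Complex.arg w) ≤ φ₁) := not_le.mpr ht
      have k7 : r ≤ ‖w‖ := h1.trans hn.le
      by_cases hn2 : ‖w‖ ≤ ρ₂ <;> by_cases ht2 : toIcoMod Real.two_pi_pos θ (Complex.arg w) ≤ φ₂ <;>
        simp [k1, hn.le, k4, ht.le, hθt, k7, hn2, ht2] <;> try ring
  rw [key, integral_sub j2 i21, integral_sub j1 i12, integral_add i22 i11,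
    integral_indicator (measurableSet_polarRect r ρ₂ θ φ₂),
    integral_indicator (measurableSet_polarRect r ρ₁ θ φ₁),
    integral_indicator (measurableSet_polarRect r ρ₁ θ φ₂),
    integral_indicator (measurableSet_polarRect r ρ₂ θ φ₁)]

lemma norm_polar' {ρ : ℝ} (hρ : 0 ≤ ρ) (φ : ℝ) :
    ‖(ρ:ℂ) * Complex.exp ((φ:ℂ) * Complex.I)‖ = ρ := by
  rw [norm_polar]; exact abs_of_nonneg hρ

lemma two_pi_bound (z : ℂ) : theta z + Real.pi * (1 - ‖z‖) < theta z + 2*Real.pi := by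
  nlinarith [Real.pi_pos, norm_nonneg z]

lemma angFrom_eq {z : ℂ} {ρ φ : ℝ} (hρ : 0 < ρ) (hφ1 : theta z ≤ φ)
    (hφ2 : φ < theta z + 2*Real.pi) :
    angFrom z ((ρ:ℂ) * Complex.exp ((φ:ℂ)*Complex.I)) = φ := by
  unfold angFrom
  obtain ⟨k, hk⟩ := arg_polar hρ φ
  rw [toIcoMod_eq_iff]
  exact ⟨⟨hφ1, hφ2⟩, ⟨k, by rw [hk]; push_cast [zsmul_eq_mul]; ring⟩⟩

lemma theta_zero : theta 0 = 0 := by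
  unfold theta
  rw [Complex.arg_zero]
  exact (toIcoMod_eq_self Real.two_pi_pos).mpr ⟨le_refl 0, by positivity⟩

lemma angFrom_zero : angFrom 0 0 = 0 := by
  unfold angFrom
  rw [Complex.arg_zero, theta_zero]
  exact (toIcoMod_eq_self Real.two_pi_pos).mpr ⟨le_refl 0, by positivity⟩

lemma mem_Bz_char {z ζ : ℂ} (h : ζ ∈ Bz z) :
    ‖z‖ ≤ ‖ζ‖ ∧ ‖ζ‖ ≤ 1 - (1-‖z‖)/2 ∧ theta z ≤ angFrom z ζ ∧
      angFrom z ζ ≤ theta z + Real.pi*(1-‖z‖) := by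
  obtain ⟨ρ, φ, h1, h2, h3, h4, rfl⟩ := h
  have hρ0 : 0 ≤ ρ := le_trans (norm_nonneg z) h1
  rcases hρ0.lt_or_eq with hρ | hρ
  · rw [norm_polar' hρ0, angFrom_eq hρ h3 (lt_of_le_of_lt h4 (two_pi_bound z))]
    exact ⟨h1, h2, h3, h4⟩
  · have hz0 : z = 0 := by
      rw [← norm_eq_zero]
      exact le_antisymm (hρ ▸ h1) (norm_nonneg z)
    subst hz0
    rw [← hρ]
    simp only [Complex.ofReal_zero, zero_mul, norm_zero, norm_zero]
    rw [theta_zero] at h3 h4 ⊢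
    rw [angFrom_zero]
    refine ⟨le_refl 0, by norm_num, le_refl 0, by positivity⟩

lemma Bzz_polar_eq {z : ℂ} {ρ φ : ℝ} (hρ : 0 < ρ) (hφ1 : theta z ≤ φ)
    (hφ2 : φ < theta z + 2*Real.pi) :
    Bzz z ((ρ:ℂ) * Complex.exp ((φ:ℂ)*Complex.I)) = polarRect ‖z‖ ρ (theta z) φ := by
  unfold Bzz
  rw [norm_polar' hρ.le, angFrom_eq hρ hφ1 hφ2]

lemma Bz_subset_disc {z : ℂ} (hz : z ∈ unitDisc) : Bz z ⊆ unitDisc := by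
  rintro w ⟨ρ, φ, h1, h2, _, _, rfl⟩
  have hρ0 : 0 ≤ ρ := le_trans (norm_nonneg z) h1
  have hz1 : ‖z‖ < 1 := hz
  show ‖(ρ:ℂ) * Complex.exp ((φ:ℂ)*Complex.I)‖ < 1
  rw [norm_polar' hρ0]
  linarith

lemma bwmo_bddAbove {f : ℂ → ℂ} (hb : IsBWMO f) :
    BddAbove {c : ℝ | ∃ z ∈ unitDisc, ∃ ζ ∈ Bz z, c = wQuot f z ζ} := by
  obtain ⟨C, hC⟩ := hb
  refine ⟨C, ?_⟩
  rintro c ⟨z', hz', ζ', hζ', rfl⟩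
  exact hC z' hz' ζ' hζ'

lemma bwmoNorm_nonneg {f : ℂ → ℂ} (hb : IsBWMO f) : 0 ≤ bwmoNorm f := by
  have h0 : (0:ℂ) ∈ unitDisc := by simp [unitDisc]
  have h00 : (0:ℂ) ∈ Bz 0 := by
    refine ⟨0, theta 0, le_of_eq (by simp), by norm_num, le_refl _,
      by simp; positivity, by simp⟩
  calc (0:ℝ) ≤ wQuot f 0 0 := mul_nonneg (inv_nonneg.mpr ENNReal.toReal_nonneg) (norm_nonneg _)
    _ ≤ bwmoNorm f := le_csSup (bwmo_bddAbove hb) ⟨0, h0, 0, h00, rfl⟩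

lemma corner_bound {f : ℂ → ℂ} (hb : IsBWMO f) {z : ℂ} (hz : z ∈ unitDisc)
    {ρ φ : ℝ} (h1 : ‖z‖ ≤ ρ) (h2 : ρ ≤ 1 - (1-‖z‖)/2) (h3 : theta z ≤ φ)
    (h4 : φ ≤ theta z + Real.pi*(1-‖z‖)) :
    ((dA (Bz z)).toReal)⁻¹ * ‖∫ w in polarRect ‖z‖ ρ (theta z) φ, (f w - avg f z) ∂dA‖
      ≤ bwmoNorm f := by
  have hρ0 : 0 ≤ ρ := le_trans (norm_nonneg z) h1
  rcases hρ0.lt_or_eq with hρ | hρ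
  · have hmem : ((ρ:ℂ) * Complex.exp ((φ:ℂ)*Complex.I)) ∈ Bz z := ⟨ρ, φ, h1, h2, h3, h4, rfl⟩
    have hle := le_csSup (bwmo_bddAbove hb)
      (⟨z, hz, _, hmem, rfl⟩ : wQuot f z ((ρ:ℂ) * Complex.exp ((φ:ℂ)*Complex.I)) ∈
        {c : ℝ | ∃ z ∈ unitDisc, ∃ ζ ∈ Bz z, c = wQuot f z ζ})
    unfold wQuot at hle
    rwa [Bzz_polar_eq hρ h3 (lt_of_le_of_lt h4 (two_pi_bound z))] at hle
  · have hzero : polarRect ‖z‖ ρ (theta z) φ ⊆ {0} := by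
      rintro w ⟨ρ', φ', a1, a2, _, _, rfl⟩
      have : ρ' = 0 := le_antisymm (a2.trans hρ.symm.le) (le_trans (norm_nonneg z) a1)
      simp [this]
    have hint0 : ∫ w in polarRect ‖z‖ ρ (theta z) φ, (f w - avg f z) ∂dA = 0 := by
      rw [Measure.restrict_eq_zero.mpr (measure_mono_null hzero dA_zero_singleton)]
      exact integral_zero_measure _
    rw [hint0]
    simpa using bwmoNorm_nonneg hb

end AuxProofs

/-- There is a constant `C > 0` such that for every locally integrable `f`
on `𝔻` satisfying the BWMO condition, for all `z ∈ 𝔻` and `z̃, ζ ∈ B(z)` with `z̃ ≾ ζ`,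
`(1/|B(z)|) |∫_{B(z̃,ζ)} (f(ξ) - f̂(z)) dA(ξ)| ≤ C ‖f‖_BWMO`. -/
theorem bwmo_subrect_bound :
    ∃ C > (0:ℝ), ∀ f : ℂ → ℂ, MeasureTheory.LocallyIntegrableOn f unitDisc dA → IsBWMO f →
      ∀ z ∈ unitDisc, ∀ ztil ∈ Bz z, ∀ ζ ∈ Bz z, precSim z ztil ζ →
        ((dA (Bz z)).toReal)⁻¹ * ‖∫ ξ in Bsub z ztil ζ, (f ξ - avg f z) ∂dA‖
          ≤ C * bwmoNorm f := by
  refine ⟨4, by norm_num, ?_⟩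
  intro f hloc hb z hz ztil hztil ζ hζ hprec
  obtain ⟨ha1, ha2, ha3, ha4⟩ := mem_Bz_char hztil
  obtain ⟨hb1, hb2, hb3, hb4⟩ := mem_Bz_char hζ
  have hK : IsCompact (Bz z) := isCompact_polarRect _ _ _ _
  have hfin : dA (Bz z) < ⊤ := by
    rw [dA, Measure.smul_apply, smul_eq_mul]
    exact ENNReal.mul_lt_top
      (ENNReal.inv_ne_top.mpr (by simp [Real.pi_pos, ENNReal.ofReal_eq_zero, not_le])).lt_top
      hK.measure_lt_top
  have hint : IntegrableOn (fun ξ => f ξ - avg f z) (Bz z) dA := by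
    have hf : IntegrableOn f (Bz z) dA :=
      hloc.integrableOn_compact_subset (Bz_subset_disc hz) hK
    exact hf.sub (integrableOn_const hfin.ne)
  have hsub : polarRect ‖z‖ ‖ζ‖ (theta z) (angFrom z ζ) ⊆ Bz z :=
    polarRect_subset le_rfl hb2 le_rfl hb4
  have hdecomp := integral_polarRect_decomp (norm_nonneg z) ha1 hprec.1 ha3 hprec.2
    (lt_of_le_of_lt hb4 (two_pi_bound z)) (hint.mono_set hsub)
  have e1 := corner_bound hb hz hb1 hb2 hb3 hb4
  have e2 := corner_bound hb hz ha1 ha2 ha3 ha4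
  have e3 := corner_bound hb hz ha1 ha2 hb3 hb4
  have e4 := corner_bound hb hz hb1 hb2 ha3 ha4
  set c := ((dA (Bz z)).toReal)⁻¹ with hc
  have hc0 : 0 ≤ c := inv_nonneg.mpr ENNReal.toReal_nonneg
  set A := ∫ w in polarRect ‖z‖ ‖ζ‖ (theta z) (angFrom z ζ), (f w - avg f z) ∂dA with hA
  set B := ∫ w in polarRect ‖z‖ ‖ztil‖ (theta z) (angFrom z ztil), (f w - avg f z) ∂dA with hB
  set C' := ∫ w in polarRect ‖z‖ ‖ztil‖ (theta z) (angFrom z ζ), (f w - avg f z) ∂dA with hC'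
  set D := ∫ w in polarRect ‖z‖ ‖ζ‖ (theta z) (angFrom z ztil), (f w - avg f z) ∂dA with hD
  have htri : ‖A + B - C' - D‖ ≤ ‖A‖ + ‖B‖ + ‖C'‖ + ‖D‖ := by
    have t1 := norm_sub_le (A + B - C') D
    have t2 := norm_sub_le (A + B) C'
    have t3 := norm_add_le A B
    linarith
  have hBsub : (∫ ξ in Bsub z ztil ζ, (f ξ - avg f z) ∂dA) = A + B - C' - D := hdecomp
  calc c * ‖∫ ξ in Bsub z ztil ζ, (f ξ - avg f z) ∂dA‖ = c * ‖A + B - C' - D‖ := by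
        rw [hBsub]
    _ ≤ c * (‖A‖ + ‖B‖ + ‖C'‖ + ‖D‖) := mul_le_mul_of_nonneg_left htri hc0
    _ = c * ‖A‖ + c * ‖B‖ + c * ‖C'‖ + c * ‖D‖ := by ring
    _ ≤ 4 * bwmoNorm f := by linarith
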